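/- Let 1 < p < ∞ and k, d ≥ 1. If there exists a 2^{1/p}-equilateral set of cardinality k + 1 contained in the unit sphere of ℓ_p^k, then there exists a 2^{1/p}-equilateral set of cardinality ⌊(1 + 1/k)·d⌋ contained in the unit sphere of ℓ_p^d. -/

import Mathlib

open Real

/-- A finite set `S` in `ℝ^d` is `lam`-equilateral for the `ℓ_p` norm
(`‖x‖_p = (∑ i, |x i| ^ p) ^ (1/p)`). -/
def IsEquilateralLp {d : ℕ} (p : ℝ) (lam : ℝ) (S : Finset (Fin d → ℝ)) : Prop :=
  ∀ x ∈ S, ∀ y ∈ S, x ≠ y → (∑ i, |x i - y i| ^ p) ^ (1 / p) = lam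

/-- Auxiliary point family: blocks of copies of `S` plus standard basis vectors. -/
def pointAux {k m r : ℕ} (S : Finset (Fin k → ℝ)) :
    ((Fin m × {x // x ∈ S}) ⊕ Fin r) → ((Fin k × Fin m) ⊕ Fin r) → ℝ
  | Sum.inl js, Sum.inl tj => if tj.2 = js.1 then js.2.1 tj.1 else 0
  | Sum.inl _, Sum.inr _ => 0
  | Sum.inr _, Sum.inl _ => 0
  | Sum.inr a, Sum.inr b => if b = a then 1 else 0

lemma norm_pointAux {k m r : ℕ} {p : ℝ} (hp : 0 < p) (S : Finset (Fin k → ℝ))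
    (hS1 : ∀ s ∈ S, ∑ t, |s t| ^ p = 1)
    (l : (Fin m × {x // x ∈ S}) ⊕ Fin r) :
    ∑ u, |pointAux (m := m) (r := r) S l u| ^ p = 1 := by
  rw [Fintype.sum_sum_type]
  cases l with
  | inl js =>
    obtain ⟨j, s⟩ := js
    have h2 : ∑ b : Fin r, |pointAux (m := m) (r := r) S (Sum.inl (j, s)) (Sum.inr b)| ^ p = 0 := by
      simp [pointAux, Real.zero_rpow hp.ne']
    rw [h2, add_zero, Fintype.sum_prod_type_right]
    have : ∀ j' : Fin m,
        (∑ t : Fin k, |pointAux (m := m) (r := r) S (Sum.inl (j, s)) (Sum.inl (t, j'))| ^ p) =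
        if j' = j then 1 else 0 := by
      intro j'
      by_cases hj : j' = j
      · simp only [pointAux, hj, if_true]
        exact hS1 s.1 s.2
      · simp [pointAux, hj, Real.zero_rpow hp.ne']
    rw [Finset.sum_congr rfl fun j' _ => this j']
    simp
  | inr a =>
    have h1 : ∑ u : Fin k × Fin m, |pointAux (m := m) (r := r) S (Sum.inr a) (Sum.inl u)| ^ p = 0 := by
      simp [pointAux, Real.zero_rpow hp.ne']
    rw [h1, zero_add]
    have : ∀ b : Fin r, |pointAux (m := m) (r := r) S (Sum.inr a) (Sum.inr b)| ^ p =
        if b = a then 1 else 0 := by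
      intro b
      by_cases hb : b = a <;> simp [pointAux, hb, Real.zero_rpow hp.ne']
    rw [Finset.sum_congr rfl fun b _ => this b]
    simp

lemma dist_pointAux {k m r : ℕ} {p : ℝ} (hp : 0 < p) (S : Finset (Fin k → ℝ))
    (hS1 : ∀ s ∈ S, ∑ t, |s t| ^ p = 1)
    (hS2 : ∀ s ∈ S, ∀ s' ∈ S, s ≠ s' → ∑ t, |s t - s' t| ^ p = 2)
    (l l' : (Fin m × {x // x ∈ S}) ⊕ Fin r) (hne : l ≠ l') :
    ∑ u, |pointAux (m := m) (r := r) S l u - pointAux (m := m) (r := r) S l' u| ^ p = 2 := by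
  have hsymm : ∀ l l' : (Fin m × {x // x ∈ S}) ⊕ Fin r,
      ∑ u, |pointAux (m := m) (r := r) S l u - pointAux (m := m) (r := r) S l' u| ^ p
        = ∑ u, |pointAux (m := m) (r := r) S l' u - pointAux (m := m) (r := r) S l u| ^ p := by
    intro l l'
    exact Finset.sum_congr rfl fun u _ => by rw [abs_sub_comm]
  have key : ∀ (js : Fin m × {x // x ∈ S}) (a : Fin r),
      ∑ u, |pointAux (m := m) (r := r) S (Sum.inl js) u - pointAux (m := m) (r := r) S (Sum.inr a) u| ^ p = 2 := by
    intro ⟨j, s⟩ a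
    rw [Fintype.sum_sum_type]
    have h1 : ∑ u : Fin k × Fin m,
        |pointAux (m := m) (r := r) S (Sum.inl (j, s)) (Sum.inl u)
          - pointAux (m := m) (r := r) S (Sum.inr a) (Sum.inl u)| ^ p = 1 := by
      rw [Fintype.sum_prod_type_right]
      have : ∀ j' : Fin m, (∑ t : Fin k,
          |pointAux (m := m) (r := r) S (Sum.inl (j, s)) (Sum.inl (t, j'))
            - pointAux (m := m) (r := r) S (Sum.inr a) (Sum.inl (t, j'))| ^ p) = if j' = j then 1 else 0 := by
        intro j'
        by_cases hj : j' = j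
        · simp only [pointAux, hj, if_true, sub_zero]
          exact hS1 s.1 s.2
        · simp [pointAux, hj, Real.zero_rpow hp.ne']
      rw [Finset.sum_congr rfl fun j' _ => this j']
      simp
    have h2 : ∑ b : Fin r,
        |pointAux (m := m) (r := r) S (Sum.inl (j, s)) (Sum.inr b)
          - pointAux (m := m) (r := r) S (Sum.inr a) (Sum.inr b)| ^ p = 1 := by
      have : ∀ b : Fin r, |pointAux (m := m) (r := r) S (Sum.inl (j, s)) (Sum.inr b)
          - pointAux (m := m) (r := r) S (Sum.inr a) (Sum.inr b)| ^ p = if b = a then 1 else 0 := by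
        intro b
        by_cases hb : b = a <;> simp [pointAux, hb, Real.zero_rpow hp.ne']
      rw [Finset.sum_congr rfl fun b _ => this b]
      simp
    rw [h1, h2]; norm_num
  cases l with
  | inl js =>
    cases l' with
    | inl js' =>
      obtain ⟨j, s⟩ := js
      obtain ⟨j', s'⟩ := js'
      rw [Fintype.sum_sum_type]
      have h2 : ∑ b : Fin r, |pointAux (m := m) (r := r) S (Sum.inl (j, s)) (Sum.inr b)
          - pointAux (m := m) (r := r) S (Sum.inl (j', s')) (Sum.inr b)| ^ p = 0 := by
        simp [pointAux, Real.zero_rpow hp.ne']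
      rw [h2, add_zero, Fintype.sum_prod_type_right]
      by_cases hj : j = j'
      · subst hj
        have hs : s ≠ s' := fun hss => hne (by rw [hss])
        have hs' : s.1 ≠ s'.1 := fun hv => hs (Subtype.ext hv)
        have : ∀ jj : Fin m, (∑ t : Fin k,
            |pointAux (m := m) (r := r) S (Sum.inl (j, s)) (Sum.inl (t, jj))
              - pointAux (m := m) (r := r) S (Sum.inl (j, s')) (Sum.inl (t, jj))| ^ p)
            = if jj = j then 2 else 0 := by
          intro jj
          by_cases hjj : jj = j
          · simp only [pointAux, hjj, if_true]
            exact hS2 s.1 s.2 s'.1 s'.2 hs'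
          · simp [pointAux, hjj, Real.zero_rpow hp.ne']
        rw [Finset.sum_congr rfl fun jj _ => this jj]
        simp
      · have : ∀ jj : Fin m, (∑ t : Fin k,
            |pointAux (m := m) (r := r) S (Sum.inl (j, s)) (Sum.inl (t, jj))
              - pointAux (m := m) (r := r) S (Sum.inl (j', s')) (Sum.inl (t, jj))| ^ p)
            = (if jj = j then 1 else 0) + (if jj = j' then 1 else 0) := by
          intro jj
          by_cases h1 : jj = j
          · subst h1
            simp only [pointAux, eq_self_iff_true, if_true, if_neg hj, sub_zero, add_zero]
            exact hS1 s.1 s.2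
          · by_cases h2 : jj = j'
            · subst h2
              have hj' : ¬ jj = j := h1
              simp only [pointAux, eq_self_iff_true, if_true, if_neg hj', zero_sub, zero_add,
                abs_neg]
              exact hS1 s'.1 s'.2
            · simp [pointAux, h1, h2, Real.zero_rpow hp.ne']
        rw [Finset.sum_congr rfl fun jj _ => this jj, Finset.sum_add_distrib]
        simp only [Finset.sum_ite_eq', Finset.mem_univ, if_true]
        norm_num
    | inr a => exact key js a
  | inr a =>
    cases l' with
    | inl js => rw [hsymm]; exact key js a
    | inr a' =>
      have ha : a ≠ a' := fun hc => hne (by rw [hc])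
      rw [Fintype.sum_sum_type]
      have h1 : ∑ u : Fin k × Fin m, |pointAux (m := m) (r := r) S (Sum.inr a) (Sum.inl u)
          - pointAux (m := m) (r := r) S (Sum.inr a') (Sum.inl u)| ^ p = 0 := by
        simp [pointAux, Real.zero_rpow hp.ne']
      rw [h1, zero_add]
      have : ∀ b : Fin r, |pointAux (m := m) (r := r) S (Sum.inr a) (Sum.inr b)
          - pointAux (m := m) (r := r) S (Sum.inr a') (Sum.inr b)| ^ p
          = (if b = a then 1 else 0) + (if b = a' then 1 else 0) := by
        intro b
        by_cases h1 : b = a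
        · subst h1
          simp only [pointAux, eq_self_iff_true, if_true, if_neg ha, sub_zero,
            add_zero, abs_one, Real.one_rpow]
        · by_cases h2 : b = a'
          · subst h2
            simp only [pointAux, eq_self_iff_true, if_true, if_neg (Ne.symm ha),
              zero_sub, zero_add, abs_neg, abs_one, Real.one_rpow]
          · simp [pointAux, h1, h2, Real.zero_rpow hp.ne']
      rw [Finset.sum_congr rfl fun b _ => this b, Finset.sum_add_distrib]
      simp only [Finset.sum_ite_eq', Finset.mem_univ, if_true]
      norm_num

/-- If the unit sphere of `ℓ_p^k` contains a `2^(1/p)`-equilateral set of `k + 1`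
points, then the unit sphere of `ℓ_p^d` contains a `2^(1/p)`-equilateral set of
`⌊(1 + 1/k) d⌋` points. -/
theorem equilateral_on_sphere_extend (p : ℝ) (hp : 1 < p) (k d : ℕ)
    (hk : 1 ≤ k) (hd : 1 ≤ d)
    (h : ∃ S : Finset (Fin k → ℝ), S.card = k + 1 ∧
      (∀ x ∈ S, (∑ i, |x i| ^ p) ^ (1 / p) = 1) ∧
      IsEquilateralLp p ((2 : ℝ) ^ (1 / p)) S) :
    ∃ S : Finset (Fin d → ℝ), (S.card : ℤ) = ⌊(1 + 1 / (k : ℝ)) * d⌋ ∧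
      (∀ x ∈ S, (∑ i, |x i| ^ p) ^ (1 / p) = 1) ∧
      IsEquilateralLp p ((2 : ℝ) ^ (1 / p)) S := by
  obtain ⟨S, hcard, hnorm, hequi⟩ := h
  have hp0 : (0 : ℝ) < p := lt_trans zero_lt_one hp
  have hpne : p ≠ 0 := hp0.ne'
  have hS1 : ∀ s ∈ S, ∑ t, |s t| ^ p = 1 := by
    intro s hs
    have h0 : (0 : ℝ) ≤ ∑ t, |s t| ^ p :=
      Finset.sum_nonneg fun t _ => Real.rpow_nonneg (abs_nonneg _) _
    calc ∑ t, |s t| ^ p = ((∑ t, |s t| ^ p) ^ (1 / p)) ^ p := by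
          rw [one_div, Real.rpow_inv_rpow h0 hpne]
      _ = 1 := by rw [hnorm s hs, Real.one_rpow]
  have hS2 : ∀ s ∈ S, ∀ s' ∈ S, s ≠ s' → ∑ t, |s t - s' t| ^ p = 2 := by
    intro s hs s' hs' hne
    have h0 : (0 : ℝ) ≤ ∑ t, |s t - s' t| ^ p :=
      Finset.sum_nonneg fun t _ => Real.rpow_nonneg (abs_nonneg _) _
    calc ∑ t, |s t - s' t| ^ p = ((∑ t, |s t - s' t| ^ p) ^ (1 / p)) ^ p := by
          rw [one_div, Real.rpow_inv_rpow h0 hpne]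
      _ = ((2 : ℝ) ^ (1 / p)) ^ p := by rw [hequi s hs s' hs' hne]
      _ = 2 := by rw [one_div, Real.rpow_inv_rpow (by norm_num) hpne]
  set m := d / k with hm
  set r := d % k with hr
  have hdk : k * m + r = d := Nat.div_add_mod d k
  obtain ⟨E⟩ : Nonempty (((Fin k × Fin m) ⊕ Fin r) ≃ Fin d) :=
    ⟨(Equiv.sumCongr finProdFinEquiv (Equiv.refl _)).trans
      ((finSumFinEquiv).trans (finCongr hdk))⟩
  set P : ((Fin m × {x // x ∈ S}) ⊕ Fin r) → (Fin d → ℝ) :=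
    fun l i => pointAux S l (E.symm i) with hP
  have hsum : ∀ f : ((Fin k × Fin m) ⊕ Fin r) → ℝ,
      ∑ i : Fin d, f (E.symm i) = ∑ u, f u := fun f => Equiv.sum_comp E.symm f
  have hPnorm : ∀ l, ∑ i, |P l i| ^ p = 1 := by
    intro l
    rw [hP]
    rw [hsum (fun u => |pointAux S l u| ^ p)]
    exact norm_pointAux hp0 S hS1 l
  have hPdist : ∀ l l', l ≠ l' → ∑ i, |P l i - P l' i| ^ p = 2 := by
    intro l l' hne
    rw [hP]
    rw [hsum (fun u => |pointAux S l u - pointAux S l' u| ^ p)]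
    exact dist_pointAux hp0 S hS1 hS2 l l' hne
  have hPinj : Function.Injective P := by
    intro l l' hll
    by_contra hne
    have h2 := hPdist l l' hne
    rw [hll] at h2
    simp [Real.zero_rpow hpne] at h2
  refine ⟨Finset.image P Finset.univ, ?_, ?_, ?_⟩
  · rw [Finset.card_image_of_injective _ hPinj, Finset.card_univ]
    have hcardL : Fintype.card ((Fin m × {x // x ∈ S}) ⊕ Fin r) = m * (k + 1) + r := by
      simp [Fintype.card_sum, Fintype.card_prod, Fintype.card_coe, hcard]
    rw [hcardL]
    have hfloor : ⌊(1 + 1 / (k : ℝ)) * d⌋ = (d : ℤ) + (m : ℤ) := by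
      have hk0 : (0 : ℝ) < (k : ℝ) := by exact_mod_cast hk
      have heq : (1 + 1 / (k : ℝ)) * d = (d : ℝ) + (d : ℝ) / (k : ℝ) := by
        field_simp
      rw [heq]
      have h0 : (0 : ℝ) ≤ (d : ℝ) / (k : ℝ) := by positivity
      have hfd : ⌊(d : ℝ) / (k : ℝ)⌋ = (m : ℤ) := by
        rw [← Int.natCast_floor_eq_floor h0, Nat.floor_div_eq_div, hm]
      have hcast : ((d : ℤ) : ℝ) = (d : ℝ) := by push_cast; ring
      nth_rewrite 1 [← hcast]
      rw [Int.floor_intCast_add, hfd]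
    rw [hfloor]
    have h2 : m * (k + 1) + r = (k * m + r) + m := by ring
    rw [h2, hdk]; push_cast; ring
  · intro x hx
    obtain ⟨l, _, rfl⟩ := Finset.mem_image.mp hx
    rw [hPnorm l, Real.one_rpow]
  · intro x hx y hy hxy
    obtain ⟨l, _, rfl⟩ := Finset.mem_image.mp hx
    obtain ⟨l', _, rfl⟩ := Finset.mem_image.mp hy
    have hne : l ≠ l' := fun hc => hxy (by rw [hc])
    rw [hPdist l l' hne]
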